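/- Every GCD-morphic sequence F admits a factorization into primary sequences: there exists a positive-valued sequence c : ℕ → ℕ such that F(n) = ∏_{j ∣ n} c(j) for all n ≥ 1. Explicitly, c can be defined recursively by c(n) = F(n) / ∏_{k ∣ n, k < n} c(k). -/

import Mathlib

private def cseq (F : ℕ → ℕ) (n : ℕ) : ℕ :=
  F n / ∏ k ∈ n.properDivisors.attach, cseq F k.1
decreasing_by exact (Nat.mem_properDivisors.mp k.2).2

private lemma cseq_def (F : ℕ → ℕ) (n : ℕ) :
    cseq F n = F n / ∏ k ∈ n.properDivisors, cseq F k := by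
  rw [cseq]
  congr 1
  exact Finset.prod_attach _ _

private lemma nat_gcd_lcm_distrib (a b c : ℕ) (ha : a ≠ 0) (hb : b ≠ 0) (hc : c ≠ 0) :
    Nat.gcd a (Nat.lcm b c) = Nat.lcm (Nat.gcd a b) (Nat.gcd a c) := by
  have hbc : Nat.lcm b c ≠ 0 := Nat.lcm_ne_zero hb hc
  have hab : Nat.gcd a b ≠ 0 := fun h => ha (Nat.gcd_eq_zero_iff.mp h).1
  have hac : Nat.gcd a c ≠ 0 := fun h => ha (Nat.gcd_eq_zero_iff.mp h).1
  have habc : Nat.gcd a (Nat.lcm b c) ≠ 0 := fun h => ha (Nat.gcd_eq_zero_iff.mp h).1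
  apply Nat.dvd_antisymm
  · rw [← Nat.factorization_le_iff_dvd habc (Nat.lcm_ne_zero hab hac),
      Nat.factorization_gcd ha hbc, Nat.factorization_lcm hb hc,
      Nat.factorization_lcm hab hac, Nat.factorization_gcd ha hb,
      Nat.factorization_gcd ha hc]
    intro p
    simp only [Finsupp.inf_apply, Finsupp.sup_apply]
    omega
  · apply Nat.lcm_dvd
    · exact Nat.dvd_gcd (Nat.gcd_dvd_left _ _)
        ((Nat.gcd_dvd_right _ _).trans (Nat.dvd_lcm_left _ _))
    · exact Nat.dvd_gcd (Nat.gcd_dvd_left _ _)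
        ((Nat.gcd_dvd_right _ _).trans (Nat.dvd_lcm_right _ _))

private lemma finset_lcm_ne_zero (s : Finset ℕ) (f : ℕ → ℕ)
    (hf : ∀ b ∈ s, f b ≠ 0) : s.lcm f ≠ 0 := by
  induction s using Finset.induction with
  | empty => simp [Finset.lcm_empty]
  | @insert b s _ ih =>
    rw [Finset.lcm_insert, lcm_eq_nat_lcm]
    exact Nat.lcm_ne_zero (hf b (Finset.mem_insert_self _ _))
      (ih fun x hx => hf x (Finset.mem_insert_of_mem hx))

private lemma gcd_finset_lcm (a : ℕ) (ha : a ≠ 0) (s : Finset ℕ) (f : ℕ → ℕ)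
    (hf : ∀ b ∈ s, f b ≠ 0) :
    Nat.gcd a (s.lcm f) = s.lcm (fun d => Nat.gcd a (f d)) := by
  induction s using Finset.induction with
  | empty => simp [Finset.lcm_empty]
  | @insert b s _ ih =>
    have hf' : ∀ x ∈ s, f x ≠ 0 := fun x hx => hf x (Finset.mem_insert_of_mem hx)
    rw [Finset.lcm_insert, Finset.lcm_insert, lcm_eq_nat_lcm, lcm_eq_nat_lcm,
      nat_gcd_lcm_distrib a _ _ ha (hf b (Finset.mem_insert_self _ _))
        (finset_lcm_ne_zero s f hf'), ih hf']

/-- Key lemma: on any divisor-closed finite set of positive integers,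
the product of `cseq F` equals the lcm of `F`. -/
private lemma prod_cseq_eq_lcm (F : ℕ → ℕ) (hpos : ∀ n, 1 ≤ n → 0 < F n)
    (hF : ∀ n m, 1 ≤ n → 1 ≤ m → Nat.gcd (F n) (F m) = F (Nat.gcd n m))
    (D : Finset ℕ) :
    0 ∉ D → (∀ d ∈ D, ∀ e, e ∣ d → e ∈ D) → ∏ d ∈ D, cseq F d = D.lcm F := by
  induction D using Finset.strongInduction with
  | _ D ih =>
    intro h0 hcl
    rcases D.eq_empty_or_nonempty with rfl | hne
    · simp [Finset.lcm_empty]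
    have hone : ∀ d ∈ D, 1 ≤ d := fun d hd =>
      Nat.one_le_iff_ne_zero.mpr (fun h => h0 (h ▸ hd))
    set m := D.max' hne with hm
    have hmD : m ∈ D := D.max'_mem hne
    have hm1 : 1 ≤ m := hone m hmD
    have hFm : 0 < F m := hpos m hm1
    set D' := D.erase m with hD'
    have hsub : D' ⊂ D := Finset.erase_ssubset hmD
    have h0' : 0 ∉ D' := fun h => h0 (Finset.mem_of_mem_erase h)
    -- D' is divisor-closed
    have hcl' : ∀ d ∈ D', ∀ e, e ∣ d → e ∈ D' := by
      intro d hd e he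
      have hdD := Finset.mem_of_mem_erase hd
      refine Finset.mem_erase.mpr ⟨?_, hcl d hdD e he⟩
      rintro rfl
      have h1 : m ≤ d := Nat.le_of_dvd (hone d hdD) he
      have h2 : d ≤ m := D.le_max' d hdD
      exact (Finset.mem_erase.mp hd).1 (le_antisymm h2 h1)
    -- proper divisors of m
    have hPsub : m.properDivisors ⊆ D' := by
      intro e he
      rw [Nat.mem_properDivisors] at he
      exact Finset.mem_erase.mpr ⟨Nat.ne_of_lt he.2, hcl m hmD e he.1⟩
    have hPss : m.properDivisors ⊂ D := lt_of_le_of_lt hPsub hsub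
    have hP0 : 0 ∉ m.properDivisors := fun h => h0' (hPsub h)
    have hPcl : ∀ d ∈ m.properDivisors, ∀ e, e ∣ d → e ∈ m.properDivisors := by
      intro d hd e he
      rw [Nat.mem_properDivisors] at hd ⊢
      have hd1 : 1 ≤ d := Nat.pos_of_mem_properDivisors (Nat.mem_properDivisors.mpr hd)
      exact ⟨he.trans hd.1, lt_of_le_of_lt (Nat.le_of_dvd hd1 he) hd.2⟩
    have IHP := ih _ hPss hP0 hPcl
    have IHD' := ih _ hsub h0' hcl'
    have IHP' : ∏ k ∈ m.properDivisors, cseq F k = m.properDivisors.lcm F := IHP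
    -- F e ∣ F m for proper divisors e
    have hFdvd : ∀ e ∈ m.properDivisors, F e ∣ F m := by
      intro e he
      have he' := Nat.mem_properDivisors.mp he
      have h1e : 1 ≤ e := Nat.pos_of_dvd_of_pos he'.1 hm1
      have h2 : Nat.gcd (F e) (F m) = F e := by
        rw [hF e m h1e hm1, Nat.gcd_eq_left he'.1]
      exact h2 ▸ Nat.gcd_dvd_right (F e) (F m)
    have hPdvd : (∏ k ∈ m.properDivisors, cseq F k) ∣ F m := by
      rw [IHP']; exact Finset.lcm_dvd hFdvd
    have hPpos : 0 < ∏ k ∈ m.properDivisors, cseq F k := Nat.pos_of_dvd_of_pos hPdvd hFm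
    have hcm : cseq F m * ∏ k ∈ m.properDivisors, cseq F k = F m := by
      rw [cseq_def]; exact Nat.div_mul_cancel hPdvd
    set L := D'.lcm F with hL
    have hFne : ∀ d ∈ D', F d ≠ 0 := fun d hd => (hpos d (hone d (Finset.mem_of_mem_erase hd))).ne'
    have hLne : L ≠ 0 := finset_lcm_ne_zero D' F hFne
    -- gcd (F m) L = P
    have hgcd : Nat.gcd (F m) L = ∏ k ∈ m.properDivisors, cseq F k := by
      apply Nat.dvd_antisymm
      · rw [hL, gcd_finset_lcm (F m) hFm.ne' D' F hFne]
        apply Finset.lcm_dvd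
        intro d hd
        have hd1 : 1 ≤ d := hone d (Finset.mem_of_mem_erase hd)
        have hgmem : Nat.gcd m d ∈ m.properDivisors := by
          rw [Nat.mem_properDivisors]
          refine ⟨Nat.gcd_dvd_left _ _, ?_⟩
          rcases lt_or_eq_of_le (Nat.le_of_dvd hm1 (Nat.gcd_dvd_left m d)) with h | h
          · exact h
          · exfalso
            have hmd : m ∣ d := h ▸ Nat.gcd_dvd_right m d
            have h1 : m ≤ d := Nat.le_of_dvd hd1 hmd
            have h2 : d ≤ m := D.le_max' d (Finset.mem_of_mem_erase hd)
            exact (Finset.mem_erase.mp hd).1 (le_antisymm h2 h1)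
        rw [hF m d hm1 hd1, IHP']
        exact Finset.dvd_lcm hgmem
      · refine Nat.dvd_gcd hPdvd ?_
        rw [IHP', hL]
        exact Finset.lcm_dvd fun e he => Finset.dvd_lcm (hPsub he)
    -- conclude
    rw [← Finset.insert_erase hmD, Finset.prod_insert (Finset.notMem_erase _ _),
      Finset.lcm_insert, lcm_eq_nat_lcm, ← hD', IHD', ← hL]
    have key : Nat.lcm (F m) L * ∏ k ∈ m.properDivisors, cseq F k
        = cseq F m * L * ∏ k ∈ m.properDivisors, cseq F k := by
      calc Nat.lcm (F m) L * ∏ k ∈ m.properDivisors, cseq F k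
          = Nat.lcm (F m) L * Nat.gcd (F m) L := by rw [hgcd]
        _ = F m * L := by rw [mul_comm, Nat.gcd_mul_lcm]
        _ = (cseq F m * ∏ k ∈ m.properDivisors, cseq F k) * L := by rw [hcm]
        _ = cseq F m * L * ∏ k ∈ m.properDivisors, cseq F k := by ring
    exact (Nat.eq_of_mul_eq_mul_right hPpos key).symm

theorem gcd_morphic_factorization (F : ℕ → ℕ) (hpos : ∀ n, 1 ≤ n → 0 < F n)
    (hF : ∀ n m, 1 ≤ n → 1 ≤ m → Nat.gcd (F n) (F m) = F (Nat.gcd n m)) :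
    ∃ c : ℕ → ℕ, (∀ j, 1 ≤ j → 0 < c j) ∧
      (∀ n, 1 ≤ n → F n = ∏ j ∈ n.divisors, c j) ∧
      (∀ n, 1 ≤ n → c n = F n / ∏ k ∈ n.properDivisors, c k) := by
  refine ⟨cseq F, ?_, ?_, fun n _ => cseq_def F n⟩
  · -- positivity, proved after the product formula
    intro j hj
    have hj0 : j ≠ 0 := Nat.one_le_iff_ne_zero.mp hj
    have h0 : (0 : ℕ) ∉ j.divisors := by simp [Nat.mem_divisors]
    have hcl : ∀ d ∈ j.divisors, ∀ e, e ∣ d → e ∈ j.divisors := by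
      intro d hd e he
      rw [Nat.mem_divisors] at hd ⊢
      exact ⟨he.trans hd.1, hd.2⟩
    have hprod := prod_cseq_eq_lcm F hpos hF j.divisors h0 hcl
    have hlcm : j.divisors.lcm F = F j := by
      apply Nat.dvd_antisymm
      · apply Finset.lcm_dvd
        intro d hd
        rw [Nat.mem_divisors] at hd
        have hd1 : 1 ≤ d := Nat.pos_of_dvd_of_pos hd.1 hj
        have h2 : Nat.gcd (F d) (F j) = F d := by
          rw [hF d j hd1 hj, Nat.gcd_eq_left hd.1]
        exact h2 ▸ Nat.gcd_dvd_right (F d) (F j)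
      · exact Finset.dvd_lcm (Nat.mem_divisors_self j hj0)
    have hFj : F j = ∏ d ∈ j.divisors, cseq F d := by rw [hprod, hlcm]
    rw [← Nat.insert_self_properDivisors hj0,
      Finset.prod_insert Nat.self_notMem_properDivisors] at hFj
    have hp := hpos j hj
    rw [hFj] at hp
    exact Nat.pos_of_ne_zero fun h => by rw [h, zero_mul] at hp; exact lt_irrefl 0 hp
  · intro n hn
    have hn0 : n ≠ 0 := Nat.one_le_iff_ne_zero.mp hn
    have h0 : (0 : ℕ) ∉ n.divisors := by simp [Nat.mem_divisors]
    have hcl : ∀ d ∈ n.divisors, ∀ e, e ∣ d → e ∈ n.divisors := by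
      intro d hd e he
      rw [Nat.mem_divisors] at hd ⊢
      exact ⟨he.trans hd.1, hd.2⟩
    rw [prod_cseq_eq_lcm F hpos hF n.divisors h0 hcl]
    apply (Nat.dvd_antisymm ?_ ?_).symm
    · apply Finset.lcm_dvd
      intro d hd
      rw [Nat.mem_divisors] at hd
      have hd1 : 1 ≤ d := Nat.pos_of_dvd_of_pos hd.1 hn
      have h2 : Nat.gcd (F d) (F n) = F d := by
        rw [hF d n hd1 hn, Nat.gcd_eq_left hd.1]
      exact h2 ▸ Nat.gcd_dvd_right (F d) (F n)
    · exact Finset.dvd_lcm (Nat.mem_divisors_self n hn0)
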